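/- (No referral influence, global asymptotic stability) Let ε > 0, λ₅ > 0 and λ₂ = λ₆ = 0, and let (C*, R*, P_C*, P_R*) denote the unique equilibrium of the customer-dynamics model, given by R* = [(λ₃+mλ₄)up + (λ₁+mλ₄)λ₅q]/(uv − λ₅λ₇), C* = [(λ₁+mλ₄)vq + (λ₃+mλ₄)λ₇p]/(uv − λ₅λ₇), P_R* = p − R*, P_C* = q − C*. Then every solution (C(t), R(t), P_C(t), P_R(t)) of the model on [t₀, ∞) converges to (C*, R*, P_C*, P_R*) as t → +∞. -/

import Mathlib

open Real Filter Topology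

lemma eventually_le_aux (a : ℝ) (ha : 0 < a) (t0 : ℝ) (x d h : ℝ → ℝ)
    (hx : ∀ t, t0 ≤ t → HasDerivAt x (d t) t)
    (hd : ∀ t, t0 ≤ t → d t ≤ -a * x t + h t)
    (hh : Tendsto h atTop (𝓝 0)) {ε : ℝ} (hε : 0 < ε) :
    ∀ᶠ t in atTop, x t ≤ ε := by
  have h2 : ∀ᶠ t in atTop, h t ≤ a * ε / 2 :=
    hh.eventually_le_const (by positivity)
  obtain ⟨T, hT⟩ := eventually_atTop.mp (h2.and (eventually_ge_atTop t0))
  -- hT : ∀ t ≥ T, h t ≤ a*ε/2 ∧ t0 ≤ t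
  set ψ : ℝ → ℝ := fun t => Real.exp (a * t) * (x t - ε / 2) with hψdef
  have hψderiv : ∀ t, t0 ≤ t →
      HasDerivAt ψ (Real.exp (a * t) * (d t + a * (x t - ε / 2))) t := by
    intro t ht
    have hlin : HasDerivAt (fun t : ℝ => a * t) a t := by
      simpa using (hasDerivAt_id t).const_mul a
    have he : HasDerivAt (fun t => Real.exp (a * t)) (Real.exp (a * t) * a) t :=
      (Real.hasDerivAt_exp (a * t)).comp t hlin
    have := he.mul ((hx t ht).sub_const (ε / 2))
    refine this.congr_deriv ?_
    ring
  have hanti : AntitoneOn ψ (Set.Ici T) := by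
    apply antitoneOn_of_deriv_nonpos (convex_Ici T)
    · intro t ht
      exact ((hψderiv t ((hT t ht).2)).continuousAt).continuousWithinAt
    · intro t ht
      rw [interior_Ici] at ht
      exact ((hψderiv t (hT t ht.le).2).differentiableAt).differentiableWithinAt
    · intro t ht
      rw [interior_Ici] at ht
      rw [(hψderiv t (hT t ht.le).2).deriv]
      have h1 : d t + a * (x t - ε / 2) ≤ 0 := by
        have := hd t (hT t ht.le).2
        have := (hT t ht.le).1
        nlinarith
      have := Real.exp_pos (a * t)
      nlinarith
  have hbound : ∀ t, T ≤ t → x t ≤ ψ T * Real.exp (-(a * t)) + ε / 2 := by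
    intro t ht
    have := hanti (Set.self_mem_Ici) (Set.mem_Ici.2 ht) ht
    have hexp := Real.exp_pos (a * t)
    have h5 : (x t - ε / 2) * Real.exp (a * t) ≤ ψ T := by
      calc (x t - ε/2) * Real.exp (a*t) = ψ t := by rw [hψdef]; ring
        _ ≤ ψ T := this
    have h6 : x t - ε / 2 ≤ ψ T * Real.exp (-(a * t)) := by
      rw [Real.exp_neg, ← div_eq_mul_inv, le_div_iff₀ hexp]
      exact h5
    linarith
  have hlim : Tendsto (fun t => ψ T * Real.exp (-(a * t)) + ε / 2) atTop (𝓝 (ε / 2)) := by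
    have h0 : Tendsto (fun t : ℝ => Real.exp (-(a * t))) atTop (𝓝 0) := by
      apply Real.tendsto_exp_atBot.comp
      exact tendsto_neg_atTop_atBot.comp (tendsto_const_mul_atTop_of_pos ha |>.2 tendsto_id)
    have := (h0.const_mul (ψ T)).add_const (ε / 2)
    simpa using this
  have h3 : ∀ᶠ t in atTop, ψ T * Real.exp (-(a * t)) + ε / 2 ≤ ε :=
    hlim.eventually_le_const (by linarith)
  filter_upwards [h3, eventually_ge_atTop T] with t h3t hTt
  exact (hbound t hTt).trans h3t

lemma tendsto_of_linear_ode (a L : ℝ) (ha : 0 < a) (t0 : ℝ) (x h : ℝ → ℝ)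
    (hx : ∀ t, t0 ≤ t → HasDerivAt x (-a * x t + h t) t)
    (hh : Tendsto h atTop (𝓝 L)) :
    Tendsto x atTop (𝓝 (L / a)) := by
  have key : Tendsto (fun t => x t - L / a) atTop (𝓝 0) := by
    rw [NormedAddCommGroup.tendsto_nhds_zero]
    intro ε hε
    have hup : ∀ᶠ t in atTop, x t - L / a ≤ ε / 2 := by
      refine eventually_le_aux a ha t0 (fun t => x t - L / a)
        (fun t => -a * x t + h t) (fun t => h t - L)
        (fun t ht => (hx t ht).sub_const _) ?_ ?_ (by linarith)
      · intro t _
        have : -a * (x t - L / a) + (h t - L) = -a * x t + h t := by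
          field_simp; ring
        linarith [this.ge]
      · simpa using hh.sub_const L
    have hdown : ∀ᶠ t in atTop, L / a - x t ≤ ε / 2 := by
      refine eventually_le_aux a ha t0 (fun t => L / a - x t)
        (fun t => -(-a * x t + h t)) (fun t => L - h t)
        (fun t ht => (hx t ht).const_sub _) ?_ ?_ (by linarith)
      · intro t _
        have : -a * (L / a - x t) + (L - h t) = -(-a * x t + h t) := by
          field_simp; ring
        linarith [this.ge]
      · have : Tendsto (fun t => L - h t) atTop (𝓝 (L - L)) := tendsto_const_nhds.sub hh
        simpa using this
    filter_upwards [hup, hdown] with t h1 h2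
    rw [Real.norm_eq_abs]
    have : |x t - L / a| ≤ ε / 2 := abs_le.2 ⟨by linarith, h1⟩
    linarith
  have := key.add_const (L / a)
  simpa using this

lemma tendsto_zero_of_lyapunov (a : ℝ) (ha : 0 < a) (t0 : ℝ) (x d h : ℝ → ℝ)
    (hx : ∀ t, t0 ≤ t → HasDerivAt x (d t) t)
    (hd : ∀ t, t0 ≤ t → d t ≤ -a * x t + h t)
    (hpos : ∀ t, t0 ≤ t → 0 ≤ x t)
    (hh : Tendsto h atTop (𝓝 0)) :
    Tendsto x atTop (𝓝 0) := by
  rw [NormedAddCommGroup.tendsto_nhds_zero]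
  intro ε hε
  have hup := eventually_le_aux a ha t0 x d h hx hd hh (show (0:ℝ) < ε/2 by linarith)
  filter_upwards [hup, eventually_ge_atTop t0] with t h1 h2
  rw [Real.norm_eq_abs]
  have : |x t| ≤ ε / 2 := abs_le.2 ⟨by linarith [hpos t h2], h1⟩
  linarith

/-- The customer-dynamics model: `(C, R, PC, PR)` solves the system on `[t0, ∞)`. -/
def IsSolution (l1 l2 l3 l4 l5 l6 l7 b1 b2 eps gam m mR al t0 : ℝ)
    (C R PC PR : ℝ → ℝ) : Prop :=
  ∀ t : ℝ, t0 ≤ t →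
    HasDerivAt C (l7 * R t - (eps + b1 + l5) * C t + (l1 + m * l4) * PC t
      + l2 * R t * PC t) t ∧
    HasDerivAt R (l5 * C t - (eps + b2 + l7) * R t + (l3 + m * l4) * PR t
      + (l2 + mR * l6) * R t * PR t) t ∧
    HasDerivAt PC ((1 - al) * gam + b1 * C t + l7 * PR t - (eps + l5 + l1 + m * l4) * PC t
      - l2 * R t * PC t) t ∧
    HasDerivAt PR (al * gam + b2 * R t + l5 * PC t - (eps + l7 + l3 + m * l4) * PR t
      - (l2 + mR * l6) * R t * PR t) t

/-- An equilibrium of the customer-dynamics model: all four right-hand sides vanish. -/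
def IsEquilibrium (l1 l2 l3 l4 l5 l6 l7 b1 b2 eps gam m mR al : ℝ)
    (C R PC PR : ℝ) : Prop :=
  l7 * R - (eps + b1 + l5) * C + (l1 + m * l4) * PC + l2 * R * PC = 0 ∧
  l5 * C - (eps + b2 + l7) * R + (l3 + m * l4) * PR + (l2 + mR * l6) * R * PR = 0 ∧
  (1 - al) * gam + b1 * C + l7 * PR - (eps + l5 + l1 + m * l4) * PC - l2 * R * PC = 0 ∧
  al * gam + b2 * R + l5 * PC - (eps + l7 + l3 + m * l4) * PR - (l2 + mR * l6) * R * PR = 0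

set_option maxHeartbeats 1000000 in
theorem no_referral_influence_global_stability (l1 l2 l3 l4 l5 l6 l7 b1 b2 eps gam m mR al : ℝ) (p q u v Cs Rs PCs PRs t0 : ℝ)
    (C R PC PR : ℝ → ℝ)
    (hl1 : 0 ≤ l1) (hl2 : 0 ≤ l2) (hl3 : 0 ≤ l3) (hl4 : 0 ≤ l4) (hl5 : 0 ≤ l5)
    (hl6 : 0 ≤ l6) (hl7 : 0 ≤ l7) (hb1 : 0 ≤ b1) (hb2 : 0 ≤ b2) (heps0 : 0 ≤ eps)
    (hgam : 0 ≤ gam) (hm : 0 ≤ m) (hmR : 0 ≤ mR) (hal0 : 0 ≤ al) (hal1 : al ≤ 1)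
    (heps : 0 < eps) (hl5pos : 0 < l5)
    (hl2 : l2 = 0) (hl6 : l6 = 0)
    (hp : p = gam * (al * eps + l5) / (eps * (eps + l5 + l7)))
    (hq : q = gam * ((1 - al) * eps + l7) / (eps * (eps + l5 + l7)))
    (hu : u = eps + b1 + l5 + l1 + m * l4) (hv : v = eps + b2 + l7 + l3 + m * l4)
    (hRs : Rs = ((l3 + m * l4) * u * p + (l1 + m * l4) * l5 * q) / (u * v - l5 * l7))
    (hCs : Cs = ((l1 + m * l4) * v * q + (l3 + m * l4) * l7 * p) / (u * v - l5 * l7))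
    (hPRs : PRs = p - Rs)
    (hPCs : PCs = q - Cs)
    (hsol : IsSolution l1 l2 l3 l4 l5 l6 l7 b1 b2 eps gam m mR al t0 C R PC PR) :
    Tendsto C atTop (𝓝 Cs) ∧ Tendsto R atTop (𝓝 Rs) ∧
    Tendsto PC atTop (𝓝 PCs) ∧ Tendsto PR atTop (𝓝 PRs) := by
  subst hl2 hl6
  have hml4 : 0 ≤ m * l4 := mul_nonneg hm hl4
  have hupos : 0 < u := by rw [hu]; linarith
  have hvpos : 0 < v := by rw [hv]; linarith
  have hdet : l5 * l7 < u * v := by rw [hu, hv]; nlinarith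
  -- equilibrium identities
  have hE1 : l7 * PRs - u * PCs + ((1 - al) * gam + b1 * q) = 0 := by
    have hdet' : u * v - l5 * l7 ≠ 0 := by nlinarith
    have hden : eps * (eps + l5 + l7) ≠ 0 := by positivity
    rw [hPRs, hPCs, hRs, hCs]
    generalize hD : u * v - l5 * l7 = D at hdet' ⊢
    field_simp
    rw [hp, hq]
    field_simp
    subst hD
    rw [hu, hv]
    ring
  have hE2 : l5 * PCs - v * PRs + (al * gam + b2 * p) = 0 := by
    have hdet' : u * v - l5 * l7 ≠ 0 := by nlinarith
    have hden : eps * (eps + l5 + l7) ≠ 0 := by positivity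
    rw [hPRs, hPCs, hRs, hCs]
    generalize hD : u * v - l5 * l7 = D at hdet' ⊢
    field_simp
    rw [hp, hq]
    field_simp
    subst hD
    rw [hu, hv]
    ring
  -- Step 1: S = C + R + PC + PR converges to gam / eps
  have hS : ∀ t, t0 ≤ t → HasDerivAt (fun s => C s + R s + PC s + PR s)
      (-eps * (C t + R t + PC t + PR t) + gam) t := by
    intro t ht
    obtain ⟨hC, hR, hPC, hPR⟩ := hsol t ht
    have := ((hC.add hR).add hPC).add hPR
    refine this.congr_deriv ?_
    ring
  have hStend : Tendsto (fun s => C s + R s + PC s + PR s) atTop (𝓝 (gam / eps)) :=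
    tendsto_of_linear_ode eps gam heps t0 _ (fun _ => gam) hS tendsto_const_nhds
  -- Step 2: Y = R + PR converges to p
  have hYd : ∀ t, t0 ≤ t → HasDerivAt (fun s => R s + PR s)
      (-(eps + l5 + l7) * (R t + PR t) + (al * gam + l5 * (C t + R t + PC t + PR t))) t := by
    intro t ht
    obtain ⟨hC, hR, hPC, hPR⟩ := hsol t ht
    have := hR.add hPR
    refine this.congr_deriv ?_
    ring
  have hYtend0 : Tendsto (fun s => R s + PR s) atTop
      (𝓝 ((al * gam + l5 * (gam / eps)) / (eps + l5 + l7))) := by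
    refine tendsto_of_linear_ode (eps + l5 + l7) _ (by linarith) t0 _
      (fun s => al * gam + l5 * (C s + R s + PC s + PR s)) hYd ?_
    exact tendsto_const_nhds.add (hStend.const_mul l5)
  have hpval : (al * gam + l5 * (gam / eps)) / (eps + l5 + l7) = p := by
    rw [hp]
    have h1 : eps ≠ 0 := ne_of_gt heps
    have h2 : eps + l5 + l7 ≠ 0 := by positivity
    field_simp
  rw [hpval] at hYtend0
  -- Step 3: X = C + PC converges to q
  have hqval : gam / eps - p = q := by
    rw [hp, hq]
    have h1 : eps ≠ 0 := ne_of_gt heps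
    have h2 : eps + l5 + l7 ≠ 0 := by positivity
    field_simp
    ring
  have hXtend : Tendsto (fun s => C s + PC s) atTop (𝓝 q) := by
    have := hStend.sub hYtend0
    rw [hqval] at this
    exact this.congr (fun s => by ring)
  -- the forcing terms converge
  have hr1tend : Tendsto (fun s => b1 * (C s + PC s - q)) atTop (𝓝 0) := by
    have := (hXtend.sub_const q).const_mul b1
    simpa using this
  have hr2tend : Tendsto (fun s => b2 * (R s + PR s - p)) atTop (𝓝 0) := by
    have := (hYtend0.sub_const p).const_mul b2
    simpa using this
  -- derivative facts for PC and PR in error form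
  have hd1 : ∀ t, t0 ≤ t → HasDerivAt (fun s => PC s - PCs)
      (-u * (PC t - PCs) + l7 * (PR t - PRs) + b1 * (C t + PC t - q)) t := by
    intro t ht
    obtain ⟨hC, hR, hPCd, hPRd⟩ := hsol t ht
    have := hPCd.sub_const PCs
    refine this.congr_deriv ?_
    rw [hu] at hE1 ⊢
    linear_combination hE1
  have hd2 : ∀ t, t0 ≤ t → HasDerivAt (fun s => PR s - PRs)
      (l5 * (PC t - PCs) - v * (PR t - PRs) + b2 * (R t + PR t - p)) t := by
    intro t ht
    obtain ⟨hC, hR, hPCd, hPRd⟩ := hsol t ht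
    have := hPRd.sub_const PRs
    refine this.congr_deriv ?_
    rw [hv] at hE2 ⊢
    linear_combination hE2
  -- main convergence for PC and PR, two cases
  have hmain : Tendsto PC atTop (𝓝 PCs) ∧ Tendsto PR atTop (𝓝 PRs) := by
    rcases eq_or_lt_of_le hl7 with h7 | h7
    · -- l7 = 0 : triangular case
      have h7' : l7 = 0 := h7.symm
      subst h7'
      have hPCtend : Tendsto PC atTop (𝓝 PCs) := by
        have key : Tendsto (fun s => PC s - PCs) atTop (𝓝 (0 / u)) := by
          refine tendsto_of_linear_ode u 0 hupos t0 _
            (fun s => b1 * (C s + PC s - q)) ?_ hr1tend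
          intro t ht
          have := hd1 t ht
          convert this using 1
          ring
        rw [zero_div] at key
        have := key.add_const PCs
        simpa using this
      refine ⟨hPCtend, ?_⟩
      have key : Tendsto (fun s => PR s - PRs) atTop (𝓝 (0 / v)) := by
        refine tendsto_of_linear_ode v 0 hvpos t0 _
          (fun s => l5 * (PC s - PCs) + b2 * (R s + PR s - p)) ?_ ?_
        · intro t ht
          have := hd2 t ht
          convert this using 1
          ring
        · have h1 : Tendsto (fun s => l5 * (PC s - PCs)) atTop (𝓝 0) := by
            have := (hPCtend.sub_const PCs).const_mul l5
            simpa using this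
          simpa using h1.add hr2tend
      rw [zero_div] at key
      have := key.add_const PRs
      simpa using this
    · -- l7 > 0 : Lyapunov case
      have hdiv : l5 / v < u / l7 := by
        rw [div_lt_div_iff₀ hvpos h7]
        nlinarith
      obtain ⟨θ, hθpos, hlow, hhigh⟩ : ∃ θ : ℝ, 0 < θ ∧ l5 / v < θ ∧ θ < u / l7 :=
        ⟨(l5 / v + u / l7) / 2, by positivity, by linarith, by linarith⟩
      have hc1 : 0 < 2 * u - 2 * l7 * θ := by
        have := (lt_div_iff₀ h7).1 hhigh
        linarith
      have hc2 : 0 < 2 * v - 2 * (l5 / θ) := by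
        have h1 : l5 < θ * v := (div_lt_iff₀ hvpos).1 hlow
        have h2 : l5 / θ < v := (div_lt_iff₀ hθpos).2 (by linarith)
        linarith
      obtain ⟨c, hcpos, hcA, hcB⟩ :
          ∃ c : ℝ, 0 < c ∧ c ≤ 2 * u - 2 * l7 * θ ∧ c ≤ 2 * v - 2 * (l5 / θ) :=
        ⟨min (2 * u - 2 * l7 * θ) (2 * v - 2 * (l5 / θ)), lt_min hc1 hc2,
          min_le_left _ _, min_le_right _ _⟩
      have hθne : θ ≠ 0 := ne_of_gt hθpos
      -- the master pointwise inequality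
      have master : ∀ a1 a2 s1 s2 : ℝ,
          2 * l5 * a1 * (-u * a1 + l7 * a2 + s1) + 2 * l7 * a2 * (l5 * a1 - v * a2 + s2)
          ≤ -(c / 2) * (l5 * a1 ^ 2 + l7 * a2 ^ 2)
            + (2 / c) * (l5 * s1 ^ 2 + l7 * s2 ^ 2) := by
        intro a1 a2 s1 s2
        have hrem : 4 * l5 * l7 * (a1 * a2) ≤
            l5 * (2 * u - c) * a1 ^ 2 + l7 * (2 * v - c) * a2 ^ 2 := by
          have h3 : 4 * l5 * l7 * (a1 * a2) ≤
              (2 * l7 * θ) * (l5 * a1 ^ 2) + (2 * (l5 / θ)) * (l7 * a2 ^ 2) := by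
            have hsq := sq_nonneg (θ * a1 - a2)
            have key : (2 * l7 * θ) * (l5 * a1 ^ 2) + (2 * (l5 / θ)) * (l7 * a2 ^ 2)
                - 4 * l5 * l7 * (a1 * a2) = (2 * l5 * l7 / θ) * (θ * a1 - a2) ^ 2 := by
              field_simp
              ring
            have hpos2 : 0 ≤ (2 * l5 * l7 / θ) * (θ * a1 - a2) ^ 2 :=
              mul_nonneg (by positivity) hsq
            linarith [key]
          have h1 : (2 * l7 * θ) * (l5 * a1 ^ 2) ≤ (2 * u - c) * (l5 * a1 ^ 2) :=
            mul_le_mul_of_nonneg_right (by linarith) (by positivity)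
          have h2 : (2 * (l5 / θ)) * (l7 * a2 ^ 2) ≤ (2 * v - c) * (l7 * a2 ^ 2) :=
            mul_le_mul_of_nonneg_right (by linarith) (by positivity)
          linarith [h3, h1, h2]
        have hcross : ∀ b s : ℝ, 2 * (b * s) ≤ (c / 2) * b ^ 2 + (2 / c) * s ^ 2 := by
          intro b s
          rw [← sub_nonneg]
          have : (c / 2) * b ^ 2 + (2 / c) * s ^ 2 - 2 * (b * s)
              = (c * b - 2 * s) ^ 2 / (2 * c) := by
            field_simp
            ring
          rw [this]
          positivity
        have hcr1 : l5 * (2 * (a1 * s1)) ≤ l5 * ((c / 2) * a1 ^ 2 + (2 / c) * s1 ^ 2) :=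
          mul_le_mul_of_nonneg_left (hcross a1 s1) hl5
        have hcr2 : l7 * (2 * (a2 * s2)) ≤ l7 * ((c / 2) * a2 ^ 2 + (2 / c) * s2 ^ 2) :=
          mul_le_mul_of_nonneg_left (hcross a2 s2) hl7
        linarith [hrem, hcr1, hcr2]
      -- the Lyapunov function
      have hVd : ∀ t, t0 ≤ t → HasDerivAt
          (fun s => l5 * (PC s - PCs) ^ 2 + l7 * (PR s - PRs) ^ 2)
          (2 * l5 * (PC t - PCs) *
              (-u * (PC t - PCs) + l7 * (PR t - PRs) + b1 * (C t + PC t - q))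
            + 2 * l7 * (PR t - PRs) *
              (l5 * (PC t - PCs) - v * (PR t - PRs) + b2 * (R t + PR t - p))) t := by
        intro t ht
        have h1 := ((hd1 t ht).pow 2).const_mul l5
        have h2 := ((hd2 t ht).pow 2).const_mul l7
        have := h1.add h2
        refine this.congr_deriv ?_
        ring
      -- pointwise differential inequality
      have hbound : ∀ t, t0 ≤ t →
          (2 * l5 * (PC t - PCs) *
              (-u * (PC t - PCs) + l7 * (PR t - PRs) + b1 * (C t + PC t - q))
            + 2 * l7 * (PR t - PRs) *
              (l5 * (PC t - PCs) - v * (PR t - PRs) + b2 * (R t + PR t - p)))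
          ≤ -(c / 2) * (l5 * (PC t - PCs) ^ 2 + l7 * (PR t - PRs) ^ 2)
            + (2 / c) * (l5 * (b1 * (C t + PC t - q)) ^ 2
                + l7 * (b2 * (R t + PR t - p)) ^ 2) := by
        intro t _
        exact master (PC t - PCs) (PR t - PRs) (b1 * (C t + PC t - q)) (b2 * (R t + PR t - p))
      -- forcing tends to zero
      have hhtend : Tendsto (fun s => (2 / c) * (l5 * (b1 * (C s + PC s - q)) ^ 2
          + l7 * (b2 * (R s + PR s - p)) ^ 2)) atTop (𝓝 0) := by
        have h1 : Tendsto (fun s => (b1 * (C s + PC s - q)) ^ 2) atTop (𝓝 0) := by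
          have := hr1tend.mul hr1tend
          simpa [sq] using this
        have h2 : Tendsto (fun s => (b2 * (R s + PR s - p)) ^ 2) atTop (𝓝 0) := by
          have := hr2tend.mul hr2tend
          simpa [sq] using this
        have := ((h1.const_mul l5).add (h2.const_mul l7)).const_mul (2 / c)
        simpa using this
      have hVpos : ∀ t, t0 ≤ t →
          0 ≤ l5 * (PC t - PCs) ^ 2 + l7 * (PR t - PRs) ^ 2 := by
        intro t _
        positivity
      have hVtend : Tendsto (fun s => l5 * (PC s - PCs) ^ 2 + l7 * (PR s - PRs) ^ 2)
          atTop (𝓝 0) :=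
        tendsto_zero_of_lyapunov (c / 2) (by positivity) t0 _ _ _ hVd hbound hVpos hhtend
      constructor
      · -- PC
        have habs : ∀ s : ℝ, ‖PC s - PCs‖ ≤
            Real.sqrt ((l5 * (PC s - PCs) ^ 2 + l7 * (PR s - PRs) ^ 2) / l5) := by
          intro s
          rw [Real.norm_eq_abs, ← Real.sqrt_sq_eq_abs]
          apply Real.sqrt_le_sqrt
          rw [le_div_iff₀ hl5pos]
          have := mul_nonneg hl7 (sq_nonneg (PR s - PRs))
          linarith
        have hg : Tendsto (fun s =>
            Real.sqrt ((l5 * (PC s - PCs) ^ 2 + l7 * (PR s - PRs) ^ 2) / l5))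
            atTop (𝓝 0) := by
          have h0 := hVtend.div_const l5
          rw [zero_div] at h0
          have := (Real.continuous_sqrt.tendsto 0).comp h0
          simpa [Function.comp_def] using this
        have := squeeze_zero_norm habs hg
        have := this.add_const PCs
        simpa using this
      · -- PR
        have habs : ∀ s : ℝ, ‖PR s - PRs‖ ≤
            Real.sqrt ((l5 * (PC s - PCs) ^ 2 + l7 * (PR s - PRs) ^ 2) / l7) := by
          intro s
          rw [Real.norm_eq_abs, ← Real.sqrt_sq_eq_abs]
          apply Real.sqrt_le_sqrt
          rw [le_div_iff₀ h7]
          have := mul_nonneg hl5 (sq_nonneg (PC s - PCs))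
          linarith
        have hg : Tendsto (fun s =>
            Real.sqrt ((l5 * (PC s - PCs) ^ 2 + l7 * (PR s - PRs) ^ 2) / l7))
            atTop (𝓝 0) := by
          have h0 := hVtend.div_const l7
          rw [zero_div] at h0
          have := (Real.continuous_sqrt.tendsto 0).comp h0
          simpa [Function.comp_def] using this
        have := squeeze_zero_norm habs hg
        have := this.add_const PRs
        simpa using this
  obtain ⟨hPCtend, hPRtend⟩ := hmain
  refine ⟨?_, ?_, hPCtend, hPRtend⟩
  · have := hXtend.sub hPCtend
    have h2 : q - PCs = Cs := by rw [hPCs]; ring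
    rw [h2] at this
    exact this.congr (fun s => by ring)
  · have := hYtend0.sub hPRtend
    have h2 : p - PRs = Rs := by rw [hPRs]; ring
    rw [h2] at this
    exact this.congr (fun s => by ring)
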